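/- Beta reduction in a pure type system satisfies preservation: if \Gamma \vdash a : A and a \leadsto b, then \Gamma \vdash b : A. -/

import Mathlib

/-- Expressions of a pure type system: sorts, de Bruijn variables,
dependent products, annotated abstractions, applications. -/
inductive Expr : Type
  | sort : Nat → Expr
  | var : Nat → Expr
  | pi : Expr → Expr → Expr
  | lam : Expr → Expr → Expr
  | app : Expr → Expr → Expr
  deriving DecidableEq

/-- Lift free de Bruijn variables `≥ k` by `d`. -/
def Expr.lift (d k : Nat) : Expr → Expr
  | .sort s => .sort s
  | .var n => if n < k then .var n else .var (n + d)
  | .pi A B => .pi (Expr.lift d k A) (Expr.lift d (k+1) B)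
  | .lam A b => .lam (Expr.lift d k A) (Expr.lift d (k+1) b)
  | .app a b => .app (Expr.lift d k a) (Expr.lift d k b)

/-- Capture-avoiding substitution of `e` for variable `k`. -/
def Expr.subst (e : Expr) (k : Nat) : Expr → Expr
  | .sort s => .sort s
  | .var n => if n < k then .var n else if n = k then Expr.lift k 0 e else .var (n - 1)
  | .pi A B => .pi (Expr.subst e k A) (Expr.subst e (k+1) B)
  | .lam A b => .lam (Expr.subst e k A) (Expr.subst e (k+1) b)
  | .app a b => .app (Expr.subst e k a) (Expr.subst e k b)

/-- One-step beta reduction, with full congruence rules. -/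
inductive Step : Expr → Expr → Prop
  | beta (A b a : Expr) : Step (.app (.lam A b) a) (Expr.subst a 0 b)
  | pi1 {A A' B} : Step A A' → Step (.pi A B) (.pi A' B)
  | pi2 {A B B'} : Step B B' → Step (.pi A B) (.pi A B')
  | lam1 {A A' b} : Step A A' → Step (.lam A b) (.lam A' b)
  | lam2 {A b b'} : Step b b' → Step (.lam A b) (.lam A b')
  | app1 {a a' b} : Step a a' → Step (.app a b) (.app a' b)
  | app2 {a b b'} : Step b b' → Step (.app a b) (.app a b')

/-- Multi-step reduction. -/
def Steps : Expr → Expr → Prop := Relation.ReflTransGen Step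

/-- Strong normalization: no infinite reduction sequences from `a`. -/
def SN (a : Expr) : Prop := Acc (fun x y => Step y x) a

/-- Base expressions: a variable applied to a list of arguments. -/
inductive Base : Expr → Prop
  | var (n : Nat) : Base (.var n)
  | app {a} (b : Expr) : Base a → Base (.app a b)

/-- Key-redex contraction: `KeyRed a b` means `a` has a key redex and
contracting it yields `b` (i.e. `b = red_k a`). -/
inductive KeyRed : Expr → Expr → Prop
  | beta (A b a : Expr) : KeyRed (.app (.lam A b) a) (Expr.subst a 0 b)
  | app {a a'} (b : Expr) : KeyRed a a' → KeyRed (.app a b) (.app a' b)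

/-- `a` has a key redex. -/
def HasKey (a : Expr) : Prop := ∃ b, KeyRed a b

/-- Saturated sets of expressions. -/
def Saturated (S : Set Expr) : Prop :=
  (∀ a ∈ S, SN a) ∧
  (∀ a, Base a → SN a → a ∈ S) ∧
  (∀ a b, SN a → KeyRed a b → b ∈ S → a ∈ S)

/-- Function space on sets of expressions. -/
def Arrow (S₁ S₂ : Set Expr) : Set Expr := {a | ∀ b ∈ S₁, Expr.app a b ∈ S₂}

/-- Beta-conversion: the equivalence closure of one-step reduction. -/
def Conv : Expr → Expr → Prop := Relation.EqvGen Step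

/-- Specification of a pure type system: sorts, axioms and rules. -/
structure PTSSpec where
  sorts : Set Nat
  ax : Set (Nat × Nat)
  rules : Set (Nat × Nat × Nat)

/-- Typing contexts: de Bruijn lists, the head is the most recent binding. -/
abbrev Ctx := List Expr

mutual
/-- PTS typing judgement `Γ ⊢ a : A`. -/
inductive Typing (P : PTSSpec) : Ctx → Expr → Expr → Prop
  | sort {Γ s₁ s₂} : Wf P Γ → (s₁, s₂) ∈ P.ax →
      Typing P Γ (.sort s₁) (.sort s₂)
  | var {Γ n A} : Wf P Γ → Γ[n]? = some A →
      Typing P Γ (.var n) (Expr.lift (n+1) 0 A)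
  | pi {Γ A B s₁ s₂ s₃} : Typing P Γ A (.sort s₁) →
      Typing P (A :: Γ) B (.sort s₂) → (s₁, s₂, s₃) ∈ P.rules →
      Typing P Γ (.pi A B) (.sort s₃)
  | lam {Γ A B b s} : Typing P Γ (.pi A B) (.sort s) →
      Typing P (A :: Γ) b B →
      Typing P Γ (.lam A b) (.pi A B)
  | app {Γ a b A B} : Typing P Γ a (.pi A B) → Typing P Γ b A →
      Typing P Γ (.app a b) (Expr.subst b 0 B)
  | conv {Γ a A B s} : Typing P Γ a A → Typing P Γ B (.sort s) →
      Conv A B → Typing P Γ a B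

/-- Well-formed contexts. -/
inductive Wf (P : PTSSpec) : Ctx → Prop
  | nil : Wf P []
  | cons {Γ A s} : Typing P Γ A (.sort s) → Wf P (A :: Γ)
end

/-- The Calculus of Constructions: `∗` is sort 0, `□` is sort 1. -/
def CC : PTSSpec :=
  { sorts := {0, 1}
    ax := {(0, 1)}
    rules := {(0, 0, 0), (1, 0, 0), (1, 1, 1), (0, 1, 1)} }


namespace Expr

theorem lift_zero (k : Nat) (t : Expr) : lift 0 k t = t := by
  induction t generalizing k <;> simp [lift, *]

theorem simpl_lift {m n i k : Nat} (hik : i ≤ k) (hk : k ≤ i + m) (t : Expr) :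
    lift n k (lift m i t) = lift (m + n) i t := by
  induction t generalizing i k with
  | var v =>
    simp only [lift]
    split_ifs <;> first
      | rfl
      | exact congrArg Expr.var (by omega)
      | (simp only [lift]; split_ifs <;> exact congrArg Expr.var (by omega))
  | pi A B ihA ihB =>
    simp only [lift]; rw [ihA hik hk, ihB (by omega) (by omega)]
  | lam A b ihA ihb =>
    simp only [lift]; rw [ihA hik hk, ihb (by omega) (by omega)]
  | app a b iha ihb =>
    simp only [lift]; rw [iha hik hk, ihb hik hk]
  | sort s => rfl

theorem lift_lift_perm {m n k : Nat} (t : Expr) : ∀ {i : Nat}, k ≤ i →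
    lift n k (lift m i t) = lift m (i + n) (lift n k t) := by
  induction t generalizing k with
  | var v =>
    intro i hki
    simp only [lift]
    split_ifs <;> first
      | rfl
      | exact congrArg Expr.var (by omega)
      | (simp only [lift]; split_ifs <;> exact congrArg Expr.var (by omega))
  | pi A B ihA ihB =>
    intro i hki
    simp only [lift]
    rw [ihA hki, ihB (by omega : k + 1 ≤ i + 1)]
    have e : i + 1 + n = i + n + 1 := by omega
    rw [e]
  | lam A b ihA ihb =>
    intro i hki
    simp only [lift]
    rw [ihA hki, ihb (by omega : k + 1 ≤ i + 1)]
    have e : i + 1 + n = i + n + 1 := by omega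
    rw [e]
  | app a b iha ihb =>
    intro i hki
    simp only [lift]; rw [iha hki, ihb hki]
  | sort s => intro i _; rfl

theorem lift_subst_lt {n k : Nat} (N t : Expr) : ∀ {p : Nat}, k ≤ p →
    lift n k (subst N p t) = subst N (n + p) (lift n k t) := by
  induction t generalizing k with
  | var v =>
    intro p hkp
    simp only [lift, subst]
    split_ifs <;> first
      | rfl
      | omega
      | exact congrArg Expr.var (by omega)
      | (simp only [lift, subst]; split_ifs <;>
          first
            | rfl
            | omega
            | exact congrArg Expr.var (by omega)
            | (rw [simpl_lift (Nat.zero_le k) (by omega)]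
               exact congrArg (fun x => lift x 0 N) (by omega)))
  | pi A B ihA ihB =>
    intro p hkp
    simp only [lift, subst]
    rw [ihA hkp, ihB (by omega : k + 1 ≤ p + 1)]
    have e : n + (p + 1) = n + p + 1 := by omega
    rw [e]
  | lam A b ihA ihb =>
    intro p hkp
    simp only [lift, subst]
    rw [ihA hkp, ihb (by omega : k + 1 ≤ p + 1)]
    have e : n + (p + 1) = n + p + 1 := by omega
    rw [e]
  | app a b iha ihb =>
    intro p hkp
    simp only [lift, subst]; rw [iha hkp, ihb hkp]
  | sort s => intro p _; rfl

theorem simpl_subst {n k : Nat} (N t : Expr) : ∀ {p : Nat}, k ≤ p → p ≤ n + k →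
    subst N p (lift (n + 1) k t) = lift n k t := by
  induction t generalizing k with
  | var v =>
    intro p hkp hp
    simp only [lift, subst]
    split_ifs <;> first
      | rfl
      | omega
      | exact congrArg Expr.var (by omega)
      | (simp only [lift, subst]; split_ifs <;>
          first | rfl | omega | exact congrArg Expr.var (by omega))
  | pi A B ihA ihB =>
    intro p hkp hp
    simp only [lift, subst]
    rw [ihA hkp hp, ihB (by omega : k + 1 ≤ p + 1) (by omega)]
  | lam A b ihA ihb =>
    intro p hkp hp
    simp only [lift, subst]
    rw [ihA hkp hp, ihb (by omega : k + 1 ≤ p + 1) (by omega)]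
  | app a b iha ihb =>
    intro p hkp hp
    simp only [lift, subst]; rw [iha hkp hp, ihb hkp hp]
  | sort s => intro p _ _; rfl

theorem distr_lift_subst {n k : Nat} (N t : Expr) :
    ∀ {p i : Nat}, i = p + k →
    lift n i (subst N p t) = subst (lift n k N) p (lift n (i + 1) t) := by
  induction t with
  | var v =>
    intro p i hi
    rcases Nat.lt_or_ge v p with hA | h
    · simp [lift, subst, hA, show v < i from by omega, show v < i + 1 from by omega]
    · rcases Nat.eq_or_lt_of_le h with hB | h
      · -- v = p
        have hv : v = p := hB.symm
        subst hv
        have e1 : subst N v (Expr.var v) = Expr.lift v 0 N := by simp [subst]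
        have e2 : Expr.lift n (i+1) (Expr.var v) = Expr.var v := by
          simp [lift, show v < i + 1 from by omega]
        have e3 : subst (Expr.lift n k N) v (Expr.var v)
            = Expr.lift v 0 (Expr.lift n k N) := by simp [subst]
        rw [e1, e2, e3, lift_lift_perm N (Nat.zero_le k),
          show (i : Nat) = k + v from by omega]
      · rcases Nat.lt_or_ge v (i+1) with hC | hD
        · -- p < v ≤ i
          simp [lift, subst, show ¬ v < p from by omega, show v ≠ p from by omega,
            show v - 1 < i from by omega, hC]
        · -- v > i
          simp [lift, subst, show ¬ v < p from by omega, show v ≠ p from by omega,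
            show ¬ v - 1 < i from by omega, show ¬ v < i + 1 from by omega,
            show ¬ v + n < p from by omega, show v + n ≠ p from by omega]
          omega
  | pi A B ihA ihB =>
    intro p i hi
    simp only [lift, subst]
    rw [ihA hi, ihB (by omega : i + 1 = (p + 1) + k)]
  | lam A b ihA ihb =>
    intro p i hi
    simp only [lift, subst]
    rw [ihA hi, ihb (by omega : i + 1 = (p + 1) + k)]
  | app a b iha ihb =>
    intro p i hi
    simp only [lift, subst]; rw [iha hi, ihb hi]
  | sort s => intro p i _; rfl

theorem distr_subst {k : Nat} (P N t : Expr) :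
    ∀ {p i : Nat}, i = p + k →
    subst P i (subst N p t) = subst (subst P k N) p (subst P (i + 1) t) := by
  induction t with
  | var v =>
    intro p i hi
    rcases Nat.lt_or_ge v p with hA | h
    · simp [subst, hA, show v < i from by omega, show v < i + 1 from by omega]
    · rcases Nat.eq_or_lt_of_le h with hB | h
      · -- v = p
        have hv : v = p := hB.symm
        subst hv
        have e1 : subst N v (Expr.var v) = Expr.lift v 0 N := by simp [subst]
        have e2 : subst P (i+1) (Expr.var v) = Expr.var v := by
          simp [subst, show v < i + 1 from by omega]
        have e3 : subst (subst P k N) v (Expr.var v) = Expr.lift v 0 (subst P k N) := by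
          simp [subst]
        rw [e1, e2, e3, lift_subst_lt P N (Nat.zero_le k), hi]
      · rcases Nat.lt_or_ge v (i+1) with hC | h2
        · -- p < v ≤ i
          simp [subst, show ¬ v < p from by omega, show v ≠ p from by omega,
            show v - 1 < i from by omega, hC]
        · rcases Nat.eq_or_lt_of_le h2 with hD | hE
          · -- v = i + 1
            have hv : v = i + 1 := hD.symm
            subst hv
            have e1 : subst N p (Expr.var (i+1)) = Expr.var i := by
              simp [subst, show ¬ i + 1 < p from by omega, show i + 1 ≠ p from by omega]
            have e2 : subst P i (Expr.var i) = Expr.lift i 0 P := by simp [subst]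
            have e3 : subst P (i+1) (Expr.var (i+1)) = Expr.lift (i+1) 0 P := by
              simp [subst]
            rw [e1, e2, e3, simpl_subst _ P (Nat.zero_le p) (by omega : p ≤ i + 0)]
          · -- v > i + 1
            simp [subst, show ¬ v < p from by omega, show v ≠ p from by omega,
              show ¬ v - 1 < i from by omega, show v - 1 ≠ i from by omega,
              show ¬ v < i + 1 from by omega, show v ≠ i + 1 from by omega,
              show ¬ v - 1 < p from by omega, show v - 1 ≠ p from by omega]
  | pi A B ihA ihB =>
    intro p i hi
    simp only [subst]
    rw [ihA hi, ihB (by omega : i + 1 = (p + 1) + k)]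
  | lam A b ihA ihb =>
    intro p i hi
    simp only [subst]
    rw [ihA hi, ihb (by omega : i + 1 = (p + 1) + k)]
  | app a b iha ihb =>
    intro p i hi
    simp only [subst]; rw [iha hi, ihb hi]
  | sort s => intro p i _; rfl

end Expr

open Expr in
theorem Step.lift {d k : Nat} {t t' : Expr} (h : Step t t') :
    Step (Expr.lift d k t) (Expr.lift d k t') := by
  induction h generalizing k with
  | beta A b a =>
    have e := Expr.distr_lift_subst (n := d) (k := k) a b (rfl : (0 + k : Nat) = 0 + k)
    simp only [Nat.zero_add] at e
    rw [Expr.lift, e]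
    exact Step.beta _ _ _
  | pi1 _ ih => exact Step.pi1 ih
  | pi2 _ ih => exact Step.pi2 ih
  | lam1 _ ih => exact Step.lam1 ih
  | lam2 _ ih => exact Step.lam2 ih
  | app1 _ ih => exact Step.app1 ih
  | app2 _ ih => exact Step.app2 ih

theorem Step.subst_left {e : Expr} {k : Nat} {t t' : Expr} (h : Step t t') :
    Step (Expr.subst e k t) (Expr.subst e k t') := by
  induction h generalizing k with
  | beta A b a =>
    have eq := Expr.distr_subst (k := k) e a b (rfl : (0 + k : Nat) = 0 + k)
    simp only [Nat.zero_add] at eq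
    rw [Expr.subst, Expr.subst, eq]
    exact Step.beta _ _ _
  | pi1 _ ih => exact Step.pi1 ih
  | pi2 _ ih => exact Step.pi2 ih
  | lam1 _ ih => exact Step.lam1 ih
  | lam2 _ ih => exact Step.lam2 ih
  | app1 _ ih => exact Step.app1 ih
  | app2 _ ih => exact Step.app2 ih

namespace Steps

theorem refl {a : Expr} : Steps a a := Relation.ReflTransGen.refl
theorem single {a b : Expr} (h : Step a b) : Steps a b := Relation.ReflTransGen.single h
theorem trans {a b c : Expr} (h1 : Steps a b) (h2 : Steps b c) : Steps a c :=
  Relation.ReflTransGen.trans h1 h2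

theorem pi1 {A A' B : Expr} (h : Steps A A') : Steps (.pi A B) (.pi A' B) :=
  Relation.ReflTransGen.lift (fun X => Expr.pi X B) (fun _ _ h => Step.pi1 h) _ _ h
theorem pi2 {A B B' : Expr} (h : Steps B B') : Steps (.pi A B) (.pi A B') :=
  Relation.ReflTransGen.lift (fun X => Expr.pi A X) (fun _ _ h => Step.pi2 h) _ _ h
theorem lam1 {A A' b : Expr} (h : Steps A A') : Steps (.lam A b) (.lam A' b) :=
  Relation.ReflTransGen.lift (fun X => Expr.lam X b) (fun _ _ h => Step.lam1 h) _ _ h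
theorem lam2 {A b b' : Expr} (h : Steps b b') : Steps (.lam A b) (.lam A b') :=
  Relation.ReflTransGen.lift (fun X => Expr.lam A X) (fun _ _ h => Step.lam2 h) _ _ h
theorem app1 {a a' b : Expr} (h : Steps a a') : Steps (.app a b) (.app a' b) :=
  Relation.ReflTransGen.lift (fun X => Expr.app X b) (fun _ _ h => Step.app1 h) _ _ h
theorem app2 {a b b' : Expr} (h : Steps b b') : Steps (.app a b) (.app a b') :=
  Relation.ReflTransGen.lift (fun X => Expr.app a X) (fun _ _ h => Step.app2 h) _ _ h

theorem subst_left {e : Expr} {k : Nat} {t t' : Expr} (h : Steps t t') :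
    Steps (Expr.subst e k t) (Expr.subst e k t') :=
  Relation.ReflTransGen.lift (fun X => Expr.subst e k X)
    (fun _ _ h => Step.subst_left h) _ _ h

end Steps

/-- Reducing the substituted expression: multi-step. -/
theorem Steps.subst_right {e e' : Expr} (h : Step e e') :
    ∀ (t : Expr) (k : Nat), Steps (Expr.subst e k t) (Expr.subst e' k t) := by
  intro t
  induction t with
  | sort s => intro k; exact Steps.refl
  | var n =>
    intro k
    simp only [Expr.subst]
    split_ifs
    · exact Steps.refl
    · exact Steps.single (Step.lift h)
    · exact Steps.refl
  | pi A B ihA ihB =>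
    intro k
    exact Steps.trans (Steps.pi1 (ihA k)) (Steps.pi2 (ihB (k+1)))
  | lam A b ihA ihb =>
    intro k
    exact Steps.trans (Steps.lam1 (ihA k)) (Steps.lam2 (ihb (k+1)))
  | app a b iha ihb =>
    intro k
    exact Steps.trans (Steps.app1 (iha k)) (Steps.app2 (ihb k))

namespace Conv

theorem refl (a : Expr) : Conv a a := Relation.EqvGen.refl a
theorem symm {a b : Expr} (h : Conv a b) : Conv b a := Relation.EqvGen.symm _ _ h
theorem trans {a b c : Expr} (h1 : Conv a b) (h2 : Conv b c) : Conv a c :=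
  Relation.EqvGen.trans _ _ _ h1 h2
theorem of_step {a b : Expr} (h : Step a b) : Conv a b := Relation.EqvGen.rel _ _ h

theorem of_steps {a b : Expr} (h : Steps a b) : Conv a b := by
  induction h with
  | refl => exact Conv.refl _
  | tail _ h2 ih => exact Conv.trans ih (Conv.of_step h2)

theorem lift {d k : Nat} {a b : Expr} (h : Conv a b) :
    Conv (Expr.lift d k a) (Expr.lift d k b) := by
  induction h with
  | rel _ _ h => exact Conv.of_step (Step.lift h)
  | refl _ => exact Conv.refl _
  | symm _ _ _ ih => exact Conv.symm ih
  | trans _ _ _ _ _ ih1 ih2 => exact Conv.trans ih1 ih2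

theorem subst_left {e : Expr} {k : Nat} {a b : Expr} (h : Conv a b) :
    Conv (Expr.subst e k a) (Expr.subst e k b) := by
  induction h with
  | rel _ _ h => exact Conv.of_step (Step.subst_left h)
  | refl _ => exact Conv.refl _
  | symm _ _ _ ih => exact Conv.symm ih
  | trans _ _ _ _ _ ih1 ih2 => exact Conv.trans ih1 ih2

end Conv

/-- Parallel reduction. -/
inductive Par : Expr → Expr → Prop
  | sort (s : Nat) : Par (.sort s) (.sort s)
  | var (n : Nat) : Par (.var n) (.var n)
  | pi {A A' B B'} : Par A A' → Par B B' → Par (.pi A B) (.pi A' B')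
  | lam {A A' b b'} : Par A A' → Par b b' → Par (.lam A b) (.lam A' b')
  | app {a a' b b'} : Par a a' → Par b b' → Par (.app a b) (.app a' b')
  | beta {A b b' a a'} : Par b b' → Par a a' →
      Par (.app (.lam A b) a) (Expr.subst a' 0 b')

namespace Par

theorem refl (t : Expr) : Par t t := by
  induction t with
  | sort s => exact Par.sort s
  | var n => exact Par.var n
  | pi A B ihA ihB => exact Par.pi ihA ihB
  | lam A b ihA ihb => exact Par.lam ihA ihb
  | app a b iha ihb => exact Par.app iha ihb

theorem of_step {a b : Expr} (h : Step a b) : Par a b := by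
  induction h with
  | beta A b a => exact Par.beta (Par.refl b) (Par.refl a)
  | pi1 _ ih => exact Par.pi ih (Par.refl _)
  | pi2 _ ih => exact Par.pi (Par.refl _) ih
  | lam1 _ ih => exact Par.lam ih (Par.refl _)
  | lam2 _ ih => exact Par.lam (Par.refl _) ih
  | app1 _ ih => exact Par.app ih (Par.refl _)
  | app2 _ ih => exact Par.app (Par.refl _) ih

theorem to_steps {a b : Expr} (h : Par a b) : Steps a b := by
  induction h with
  | sort s => exact Steps.refl
  | var n => exact Steps.refl
  | pi _ _ ih1 ih2 => exact Steps.trans (Steps.pi1 ih1) (Steps.pi2 ih2)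
  | lam _ _ ih1 ih2 => exact Steps.trans (Steps.lam1 ih1) (Steps.lam2 ih2)
  | app _ _ ih1 ih2 => exact Steps.trans (Steps.app1 ih1) (Steps.app2 ih2)
  | beta _ _ ih1 ih2 =>
    exact Steps.trans (Steps.app1 (Steps.lam2 ih1))
      (Steps.trans (Steps.app2 ih2) (Steps.single (Step.beta _ _ _)))

theorem lift {d : Nat} {a b : Expr} (h : Par a b) :
    ∀ k, Par (Expr.lift d k a) (Expr.lift d k b) := by
  induction h with
  | sort s => intro k; exact Par.refl _
  | var n => intro k; exact Par.refl _
  | pi _ _ ih1 ih2 => intro k; exact Par.pi (ih1 k) (ih2 (k+1))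
  | lam _ _ ih1 ih2 => intro k; exact Par.lam (ih1 k) (ih2 (k+1))
  | app _ _ ih1 ih2 => intro k; exact Par.app (ih1 k) (ih2 k)
  | @beta A c c' e e' _ _ ih1 ih2 =>
    intro k
    have eq := Expr.distr_lift_subst (n := d) (k := k) e' c' (rfl : (0 + k : Nat) = 0 + k)
    simp only [Nat.zero_add] at eq
    rw [Expr.lift, eq]
    exact Par.beta (ih1 (k+1)) (ih2 k)

theorem subst {a a' s s' : Expr} (ha : Par a a') (hs : Par s s') :
    ∀ k, Par (Expr.subst s k a) (Expr.subst s' k a') := by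
  induction ha with
  | sort s0 => intro k; exact Par.refl _
  | var n =>
    intro k
    simp only [Expr.subst]
    split_ifs
    · exact Par.refl _
    · exact Par.lift hs 0
    · exact Par.refl _
  | pi _ _ ih1 ih2 => intro k; exact Par.pi (ih1 k) (ih2 (k+1))
  | lam _ _ ih1 ih2 => intro k; exact Par.lam (ih1 k) (ih2 (k+1))
  | app _ _ ih1 ih2 => intro k; exact Par.app (ih1 k) (ih2 k)
  | @beta A c c' e e' _ _ ih1 ih2 =>
    intro k
    have eq := Expr.distr_subst (k := k) s' e' c' (rfl : (0 + k : Nat) = 0 + k)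
    simp only [Nat.zero_add] at eq
    rw [Expr.subst, Expr.subst, eq]
    exact Par.beta (ih1 (k+1)) (ih2 k)

end Par

/-- Complete development. -/
def Expr.cd : Expr → Expr
  | .sort s => .sort s
  | .var n => .var n
  | .pi A B => .pi A.cd B.cd
  | .lam A b => .lam A.cd b.cd
  | .app (.lam _ b) a => Expr.subst a.cd 0 b.cd
  | .app a b => .app a.cd b.cd

theorem Par.triangle {t u : Expr} (h : Par t u) : Par u t.cd := by
  induction h with
  | sort s => exact Par.refl _
  | var n => exact Par.refl _
  | pi _ _ ih1 ih2 => exact Par.pi ih1 ih2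
  | lam _ _ ih1 ih2 => exact Par.lam ih1 ih2
  | @app a a' b b' ha _ iha ihb =>
    match a, ha, iha with
    | .lam A c, ha, iha =>
      cases ha with
      | lam hA hc =>
        cases iha with
        | lam ihA ihc =>
          exact Par.beta ihc ihb
    | .sort s, ha, iha => exact Par.app iha ihb
    | .var n, ha, iha => exact Par.app iha ihb
    | .pi A B, ha, iha => exact Par.app iha ihb
    | .app x y, ha, iha => exact Par.app iha ihb
  | @beta A c c' b b' _ _ ih1 ih2 =>
    exact Par.subst ih1 ih2 0

theorem Par.diamond {t u v : Expr} (h1 : Par t u) (h2 : Par t v) :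
    ∃ w, Par u w ∧ Par v w := ⟨t.cd, h1.triangle, h2.triangle⟩

theorem steps_iff_parSteps {a b : Expr} :
    Steps a b ↔ Relation.ReflTransGen Par a b := by
  constructor
  · exact fun h => Relation.ReflTransGen.mono (fun _ _ => Par.of_step) _ _ h
  · intro h
    induction h with
    | refl => exact Steps.refl
    | tail _ h2 ih => exact Steps.trans ih (Par.to_steps h2)

theorem steps_confluent {a b c : Expr} (h1 : Steps a b) (h2 : Steps a c) :
    ∃ d, Steps b d ∧ Steps c d := by
  have cr := Relation.church_rosser (r := Par)
    (fun x y z hxy hxz => by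
      obtain ⟨w, hw1, hw2⟩ := Par.diamond hxy hxz
      exact ⟨w, Relation.ReflGen.single hw1, Relation.ReflTransGen.single hw2⟩)
    (steps_iff_parSteps.mp h1) (steps_iff_parSteps.mp h2)
  obtain ⟨d, hd1, hd2⟩ := cr
  exact ⟨d, steps_iff_parSteps.mpr hd1, steps_iff_parSteps.mpr hd2⟩

theorem conv_church_rosser {a b : Expr} (h : Conv a b) :
    ∃ d, Steps a d ∧ Steps b d := by
  induction h with
  | rel x y hxy => exact ⟨y, Steps.single hxy, Steps.refl⟩
  | refl x => exact ⟨x, Steps.refl, Steps.refl⟩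
  | symm x y _ ih => obtain ⟨d, h1, h2⟩ := ih; exact ⟨d, h2, h1⟩
  | trans x y z _ _ ih1 ih2 =>
    obtain ⟨d1, hx, hy⟩ := ih1
    obtain ⟨d2, hy', hz⟩ := ih2
    obtain ⟨d, hd1, hd2⟩ := steps_confluent hy hy'
    exact ⟨d, Steps.trans hx hd1, Steps.trans hz hd2⟩

theorem steps_sort {s : Nat} {x : Expr} (h : Steps (.sort s) x) : x = .sort s := by
  induction h with
  | refl => rfl
  | tail _ h2 ih => subst ih; cases h2

theorem steps_pi {A B : Expr} {x : Expr} (h : Steps (.pi A B) x) :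
    ∃ A' B', x = .pi A' B' ∧ Steps A A' ∧ Steps B B' := by
  induction h with
  | refl => exact ⟨A, B, rfl, Steps.refl, Steps.refl⟩
  | tail _ h2 ih =>
    obtain ⟨A', B', rfl, hA, hB⟩ := ih
    cases h2 with
    | pi1 h => exact ⟨_, B', rfl, Steps.trans hA (Steps.single h), hB⟩
    | pi2 h => exact ⟨A', _, rfl, hA, Steps.trans hB (Steps.single h)⟩

theorem conv_sort_sort {s₁ s₂ : Nat} (h : Conv (.sort s₁) (.sort s₂)) : s₁ = s₂ := by
  obtain ⟨d, h1, h2⟩ := conv_church_rosser h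
  rw [steps_sort h1] at h2
  exact Expr.sort.inj (steps_sort h2)

theorem conv_pi_pi {A B A' B' : Expr} (h : Conv (.pi A B) (.pi A' B')) :
    Conv A A' ∧ Conv B B' := by
  obtain ⟨d, h1, h2⟩ := conv_church_rosser h
  obtain ⟨A₀, B₀, rfl, hA, hB⟩ := steps_pi h1
  obtain ⟨A₁, B₁, he, hA', hB'⟩ := steps_pi h2
  injection he with e1 e2
  subst e1; subst e2
  exact ⟨Conv.trans (Conv.of_steps hA) (Conv.symm (Conv.of_steps hA')),
    Conv.trans (Conv.of_steps hB) (Conv.symm (Conv.of_steps hB'))⟩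

theorem typing_wf {P : PTSSpec} {Γ t T} (h : Typing P Γ t T) : Wf P Γ := by
  induction h using Typing.rec (motive_2 := fun _ _ => True) with
  | sort hw _ _ => exact hw
  | var hw _ _ => exact hw
  | pi _ _ _ ihA _ => exact ihA
  | lam _ _ ihpi _ => exact ihpi
  | app _ _ iha _ => exact iha
  | conv _ _ _ ih _ => exact ih
  | nil => trivial
  | cons _ _ => trivial

/-- Inversion for Pi types. -/
theorem pi_inv {P : PTSSpec} {Γ t T} (h : Typing P Γ t T) :
    ∀ A B, t = .pi A B → ∃ s₁ s₂ s₃, Typing P Γ A (.sort s₁) ∧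
      Typing P (A :: Γ) B (.sort s₂) ∧ (s₁, s₂, s₃) ∈ P.rules ∧ Conv (.sort s₃) T := by
  induction h using Typing.rec (motive_2 := fun _ _ => True) with
  | sort _ _ _ => intro A B he; cases he
  | var _ _ _ => intro A B he; cases he
  | pi h1 h2 hr _ _ =>
    intro A B he
    cases he
    exact ⟨_, _, _, h1, h2, hr, Conv.refl _⟩
  | lam _ _ _ _ => intro A B he; cases he
  | app _ _ _ _ => intro A B he; cases he
  | conv _ _ hc ih _ =>
    intro A B he
    obtain ⟨s₁, s₂, s₃, h1, h2, hr, hcv⟩ := ih A B he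
    exact ⟨s₁, s₂, s₃, h1, h2, hr, Conv.trans hcv hc⟩
  | nil => trivial
  | cons _ _ => trivial

/-- Inversion for lambdas. -/
theorem lam_inv {P : PTSSpec} {Γ t T} (h : Typing P Γ t T) :
    ∀ A b, t = .lam A b → ∃ B s, Typing P Γ (.pi A B) (.sort s) ∧
      Typing P (A :: Γ) b B ∧ Conv (.pi A B) T := by
  induction h using Typing.rec (motive_2 := fun _ _ => True) with
  | sort _ _ _ => intro A b he; cases he
  | var _ _ _ => intro A b he; cases he
  | pi _ _ _ _ _ => intro A b he; cases he
  | lam h1 h2 _ _ =>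
    intro A b he
    cases he
    exact ⟨_, _, h1, h2, Conv.refl _⟩
  | app _ _ _ _ => intro A b he; cases he
  | conv _ _ hc ih _ =>
    intro A b he
    obtain ⟨B, s, h1, h2, hcv⟩ := ih A b he
    exact ⟨B, s, h1, h2, Conv.trans hcv hc⟩
  | nil => trivial
  | cons _ _ => trivial

/-- Insertion of a binding into a context. -/
inductive Ins (W : Expr) : Nat → Ctx → Ctx → Prop
  | zero (Γ) : Ins W 0 Γ (W :: Γ)
  | succ {k Γ Γ'} (A) : Ins W k Γ Γ' → Ins W (k+1) (A :: Γ) (Expr.lift 1 k A :: Γ')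

theorem ins_get_lt {W k Γ Γ'} (h : Ins W k Γ Γ') :
    ∀ {n A}, n < k → Γ[n]? = some A → Γ'[n]? = some (Expr.lift 1 (k-1-n) A) := by
  induction h with
  | zero Γ => intro n A hn; omega
  | succ A₀ h ih =>
    intro n A hn hg
    cases n with
    | zero =>
      simp only [List.getElem?_cons_zero, Option.some.injEq] at hg
      subst hg
      simp
    | succ m =>
      simp only [List.getElem?_cons_succ] at hg ⊢
      have := ih (by omega) hg
      rw [this]
      congr 2
      omega

theorem ins_get_ge {W k Γ Γ'} (h : Ins W k Γ Γ') :
    ∀ {n}, k ≤ n → Γ'[n+1]? = Γ[n]? := by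
  induction h with
  | zero Γ => intro n _; simp
  | succ A₀ h ih =>
    intro n hn
    cases n with
    | zero => omega
    | succ m =>
      simp only [List.getElem?_cons_succ]
      exact ih (by omega)

theorem weakening {P : PTSSpec} {Γ t T} (h : Typing P Γ t T) :
    ∀ {k W Γ'}, Ins W k Γ Γ' → Wf P Γ' →
    Typing P Γ' (Expr.lift 1 k t) (Expr.lift 1 k T) := by
  induction h using Typing.rec (motive_2 := fun _ _ => True) with
  | sort hw ha _ => intro k W Γ' hi hw'; exact Typing.sort hw' ha
  | @var Γ n A hw hg _ =>
    intro k W Γ' hi hw'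
    rcases Nat.lt_or_ge n k with hn | hn
    · have e : Expr.lift 1 k (Expr.var n) = Expr.var n := by
        simp [Expr.lift, hn]
      have e2 : Expr.lift 1 k (Expr.lift (n+1) 0 A)
          = Expr.lift (n+1) 0 (Expr.lift 1 (k-1-n) A) := by
        rw [Expr.lift_lift_perm A (Nat.zero_le (k-1-n))]
        congr 1
        omega
      rw [e, e2]
      exact Typing.var hw' (ins_get_lt hi hn hg)
    · have e : Expr.lift 1 k (Expr.var n) = Expr.var (n+1) := by
        simp [Expr.lift, show ¬ n < k from by omega]
      rw [e, Expr.simpl_lift (Nat.zero_le k) (by omega : k ≤ 0 + (n+1))]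
      exact Typing.var hw' (by rw [ins_get_ge hi hn]; exact hg)
  | @pi Γ A B s₁ s₂ s₃ h1 h2 hr ih1 ih2 =>
    intro k W Γ' hi hw'
    have ih1' := ih1 hi hw'
    have hw2 : Wf P (Expr.lift 1 k A :: Γ') := Wf.cons ih1'
    have ih2' := ih2 (Ins.succ A hi) hw2
    exact Typing.pi ih1' ih2' hr
  | @lam Γ A B b s h1 h2 ih1 ih2 =>
    intro k W Γ' hi hw'
    have ih1' := ih1 hi hw'
    obtain ⟨t₁, t₂, t₃, hA, hB, _, _⟩ := pi_inv ih1' _ _ rfl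
    have hw2 : Wf P (Expr.lift 1 k A :: Γ') := Wf.cons hA
    have ih2' := ih2 (Ins.succ A hi) hw2
    exact Typing.lam ih1' ih2'
  | @app Γ a b A B h1 h2 ih1 ih2 =>
    intro k W Γ' hi hw'
    have eq := Expr.distr_lift_subst (n := 1) (k := k) b B (rfl : (0 + k : Nat) = 0 + k)
    simp only [Nat.zero_add] at eq
    rw [Expr.lift, eq]
    exact Typing.app (ih1 hi hw') (ih2 hi hw')
  | conv h1 h2 hc ih1 ih2 =>
    intro k W Γ' hi hw'
    exact Typing.conv (ih1 hi hw') (ih2 hi hw') (Conv.lift hc)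
  | nil => trivial
  | cons _ _ => trivial

theorem wf_get {P : PTSSpec} :
    ∀ {n : Nat} {Γ : Ctx} {A : Expr}, Wf P Γ → Γ[n]? = some A →
    ∃ s, Typing P Γ (Expr.lift (n+1) 0 A) (.sort s) := by
  intro n
  induction n with
  | zero =>
    intro Γ A hw hg
    cases hw with
    | nil => simp at hg
    | @cons Γ₀ A₀ s₀ hA =>
      simp only [List.getElem?_cons_zero, Option.some.injEq] at hg
      subst hg
      have := weakening hA (Ins.zero Γ₀) (Wf.cons hA)
      exact ⟨s₀, this⟩
  | succ m ih =>
    intro Γ A hw hg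
    cases hw with
    | nil => simp at hg
    | @cons Γ₀ A₀ s₀ hA =>
      simp only [List.getElem?_cons_succ] at hg
      obtain ⟨s, hs⟩ := ih (typing_wf hA) hg
      have := weakening hs (Ins.zero Γ₀) (Wf.cons hA)
      rw [Expr.simpl_lift (Nat.zero_le 0) (by omega : (0:Nat) ≤ 0 + (m+1))] at this
      exact ⟨s, this⟩

/-- Substituting a binding out of a context. -/
inductive SubC (P : PTSSpec) (N W : Expr) : Nat → Ctx → Ctx → Prop
  | zero {Γ} : Typing P Γ N W → SubC P N W 0 (W :: Γ) Γ
  | succ {k Γ Γ'} (A) : SubC P N W k Γ Γ' →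
      SubC P N W (k+1) (A :: Γ) (Expr.subst N k A :: Γ')

theorem sub_get_lt {P N W k Γ Γ'} (h : SubC P N W k Γ Γ') :
    ∀ {n A}, n < k → Γ[n]? = some A → Γ'[n]? = some (Expr.subst N (k-1-n) A) := by
  induction h with
  | zero _ => intro n A hn; omega
  | succ A₀ h ih =>
    intro n A hn hg
    cases n with
    | zero =>
      simp only [List.getElem?_cons_zero, Option.some.injEq] at hg
      subst hg
      simp
    | succ m =>
      simp only [List.getElem?_cons_succ] at hg ⊢
      have := ih (by omega) hg
      rw [this]
      congr 2
      omega

theorem sub_get_eq {P N W k Γ Γ'} (h : SubC P N W k Γ Γ') : Γ[k]? = some W := by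
  induction h with
  | zero _ => simp
  | succ A₀ h ih => simpa using ih

theorem sub_get_gt {P N W k Γ Γ'} (h : SubC P N W k Γ Γ') :
    ∀ {n}, k < n → Γ'[n-1]? = Γ[n]? := by
  induction h with
  | zero _ =>
    intro n hn
    cases n with
    | zero => omega
    | succ m => simp
  | succ A₀ h ih =>
    intro n hn
    cases n with
    | zero => omega
    | succ m =>
      simp only [List.getElem?_cons_succ]
      cases m with
      | zero => omega
      | succ p =>
        have := ih (n := p + 1) (by omega)
        simpa using this

theorem sub_typed {P N W k Γ Γ'} (h : SubC P N W k Γ Γ') (hw : Wf P Γ') :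
    Typing P Γ' (Expr.lift k 0 N) (Expr.lift k 0 W) := by
  induction h with
  | zero hN => rw [Expr.lift_zero, Expr.lift_zero]; exact hN
  | @succ k₀ Γ₀ Γ₀' A₀ h ih =>
    cases hw with
    | @cons _ _ s hA =>
      have hw0 : Wf P Γ₀' := typing_wf hA
      have := weakening (ih hw0) (Ins.zero Γ₀') (Wf.cons hA)
      rw [Expr.simpl_lift (Nat.zero_le 0) (by omega : (0:Nat) ≤ 0 + k₀),
        Expr.simpl_lift (Nat.zero_le 0) (by omega : (0:Nat) ≤ 0 + k₀)] at this
      exact this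

theorem substitution {P : PTSSpec} {Γ t T} (h : Typing P Γ t T) :
    ∀ {k N W Γ'}, SubC P N W k Γ Γ' → Wf P Γ' →
    Typing P Γ' (Expr.subst N k t) (Expr.subst N k T) := by
  induction h using Typing.rec (motive_2 := fun _ _ => True) with
  | sort hw ha _ => intro k N W Γ' hsub hw'; exact Typing.sort hw' ha
  | @var Γ n A hw hg _ =>
    intro k N W Γ' hsub hw'
    rcases Nat.lt_trichotomy n k with hn | hn | hn
    · have e : Expr.subst N k (Expr.var n) = Expr.var n := by simp [Expr.subst, hn]
      have e2 : Expr.subst N k (Expr.lift (n+1) 0 A)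
          = Expr.lift (n+1) 0 (Expr.subst N (k-1-n) A) := by
        rw [Expr.lift_subst_lt N A (Nat.zero_le (k-1-n))]
        congr 1
        omega
      rw [e, e2]
      exact Typing.var hw' (sub_get_lt hsub hn hg)
    · subst hn
      have hgW := sub_get_eq hsub
      rw [hg] at hgW
      injection hgW with hAW
      subst hAW
      have e : Expr.subst N n (Expr.var n) = Expr.lift n 0 N := by
        simp [Expr.subst]
      rw [e, Expr.simpl_subst N A (Nat.zero_le n) (by omega : n ≤ n + 0)]
      exact sub_typed hsub hw'
    · have e : Expr.subst N k (Expr.var n) = Expr.var (n - 1) := by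
        simp [Expr.subst, show ¬ n < k from by omega, show n ≠ k from by omega]
      rw [e, Expr.simpl_subst N A (Nat.zero_le k) (by omega : k ≤ n + 0)]
      have := Typing.var (P := P) hw' (sub_get_gt hsub hn ▸ hg)
      rw [show (n - 1 + 1 : Nat) = n from by omega] at this
      exact this
  | @pi Γ A B s₁ s₂ s₃ h1 h2 hr ih1 ih2 =>
    intro k N W Γ' hsub hw'
    have ih1' := ih1 hsub hw'
    have hw2 : Wf P (Expr.subst N k A :: Γ') := Wf.cons ih1'
    have ih2' := ih2 (SubC.succ A hsub) hw2
    exact Typing.pi ih1' ih2' hr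
  | @lam Γ A B b s h1 h2 ih1 ih2 =>
    intro k N W Γ' hsub hw'
    have ih1' := ih1 hsub hw'
    obtain ⟨t₁, t₂, t₃, hA, hB, _, _⟩ := pi_inv ih1' _ _ rfl
    have hw2 : Wf P (Expr.subst N k A :: Γ') := Wf.cons hA
    have ih2' := ih2 (SubC.succ A hsub) hw2
    exact Typing.lam ih1' ih2'
  | @app Γ a b A B h1 h2 ih1 ih2 =>
    intro k N W Γ' hsub hw'
    have eq := Expr.distr_subst (k := k) N b B (rfl : (0 + k : Nat) = 0 + k)
    simp only [Nat.zero_add] at eq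
    rw [Expr.subst, eq]
    exact Typing.app (ih1 hsub hw') (ih2 hsub hw')
  | conv h1 h2 hc ih1 ih2 =>
    intro k N W Γ' hsub hw'
    exact Typing.conv (ih1 hsub hw') (ih2 hsub hw') (Conv.subst_left hc)
  | nil => trivial
  | cons _ _ => trivial

theorem Expr.subst_var0_lift (t : Expr) : ∀ k, Expr.subst (.var 0) k (Expr.lift 1 (k+1) t) = t := by
  induction t with
  | sort s => intro k; rfl
  | var n =>
    intro k
    rcases Nat.lt_trichotomy n k with h | h | h
    · simp [Expr.lift, Expr.subst, h, show n < k + 1 from by omega]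
    · subst h
      simp [Expr.lift, Expr.subst, show n < n + 1 from by omega]
    · simp [Expr.lift, Expr.subst, show ¬ n < k + 1 from by omega,
        show ¬ n + 1 < k from by omega, show n + 1 ≠ k from by omega]
  | pi A B ihA ihB => intro k; simp [Expr.lift, Expr.subst, ihA k, ihB (k+1)]
  | lam A b ihA ihb => intro k; simp [Expr.lift, Expr.subst, ihA k, ihb (k+1)]
  | app a b iha ihb => intro k; simp [Expr.lift, Expr.subst, iha k, ihb k]


theorem ctx_conv' {P : PTSSpec} {Γ : Ctx} {A A' t T : Expr} {s s' : Nat}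
    (h : Typing P (A :: Γ) t T) (hc : Conv A A')
    (hA' : Typing P Γ A' (.sort s')) (hA : Typing P Γ A (.sort s)) :
    Typing P (A' :: Γ) t T := by
  have hwA' : Wf P (A' :: Γ) := Wf.cons hA'
  have hliftA : Typing P (A' :: Γ) (Expr.lift 1 0 A) (.sort s) :=
    weakening hA (Ins.zero Γ) hwA'
  have hv : Typing P (A' :: Γ) (.var 0) (Expr.lift 1 0 A) :=
    Typing.conv (Typing.var hwA' (by simp)) hliftA (Conv.lift (Conv.symm hc))
  have hw2 : Wf P (Expr.lift 1 0 A :: A' :: Γ) := Wf.cons hliftA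
  have hweak := weakening h (Ins.succ A (Ins.zero Γ)) hw2
  have hsubc : SubC P (.var 0) (Expr.lift 1 0 A) 0
      (Expr.lift 1 0 A :: A' :: Γ) (A' :: Γ) := SubC.zero hv
  have hfinal := substitution hweak hsubc hwA'
  rw [Expr.subst_var0_lift t 0, Expr.subst_var0_lift T 0] at hfinal
  exact hfinal

theorem type_correct {P : PTSSpec} {Γ t T} (h : Typing P Γ t T) :
    (∃ s, T = .sort s) ∨ ∃ s, Typing P Γ T (.sort s) := by
  induction h using Typing.rec (motive_2 := fun _ _ => True) with
  | sort _ _ _ => exact Or.inl ⟨_, rfl⟩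
  | var hw hg _ => exact Or.inr (wf_get hw hg)
  | pi _ _ _ _ _ => exact Or.inl ⟨_, rfl⟩
  | lam h1 _ _ _ => exact Or.inr ⟨_, h1⟩
  | app h1 h2 ih1 _ =>
    rcases ih1 with ⟨s, he⟩ | ⟨s, hT⟩
    · simp at he
    · obtain ⟨s₁, s₂, s₃, hA, hB, _, _⟩ := pi_inv hT _ _ rfl
      exact Or.inr ⟨s₂, substitution hB (SubC.zero h2) (typing_wf h1)⟩
  | conv _ h2 _ _ _ => exact Or.inr ⟨_, h2⟩
  | nil => trivial
  | cons _ _ => trivial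

theorem preservation' {P : PTSSpec} {Γ : Ctx} {t T : Expr} (ht : Typing P Γ t T) :
    ∀ x, Step t x → Typing P Γ x T := by
  induction ht using Typing.rec (motive_2 := fun _ _ => True) with
  | sort _ _ _ => intro x hs; cases hs
  | var _ _ _ => intro x hs; cases hs
  | pi h1 h2 hr ih1 ih2 =>
    intro x hs
    cases hs with
    | pi1 hA =>
      exact Typing.pi (ih1 _ hA) (ctx_conv' h2 (Conv.of_step hA) (ih1 _ hA) h1) hr
    | pi2 hB => exact Typing.pi h1 (ih2 _ hB) hr
  | @lam Γ A B b s h1 h2 ih1 ih2 =>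
    intro x hs
    cases hs with
    | lam1 hA =>
      rename_i A'
      have hpiA' : Typing P Γ (.pi A' B) (.sort s) := ih1 _ (Step.pi1 hA)
      obtain ⟨t1, t2, t3, hA'ty, hB', _, _⟩ := pi_inv hpiA' _ _ rfl
      obtain ⟨u1, u2, u3, hAty, hBty, _, _⟩ := pi_inv h1 _ _ rfl
      have hb' : Typing P (A' :: Γ) b B := ctx_conv' h2 (Conv.of_step hA) hA'ty hAty
      exact Typing.conv (Typing.lam hpiA' hb') h1
        (Conv.symm (Conv.of_step (Step.pi1 hA)))
    | lam2 hb => exact Typing.lam h1 (ih2 _ hb)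
  | @app Γ f c A B h1 h2 ih1 ih2 =>
    intro x hs
    cases hs with
    | app1 hf => exact Typing.app (ih1 _ hf) h2
    | app2 hc =>
      rename_i c'
      have happ := Typing.app h1 (ih2 _ hc)
      rcases type_correct h1 with ⟨s, he⟩ | ⟨s, hT⟩
      · simp at he
      · obtain ⟨s₁, s₂, s₃, hA, hB, _, _⟩ := pi_inv hT _ _ rfl
        have hBty := substitution hB (SubC.zero h2) (typing_wf h1)
        exact Typing.conv happ hBty
          (Conv.symm (Conv.of_steps (Steps.subst_right hc B 0)))
    | beta A₀ b₀ _ =>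
      obtain ⟨B', s', hpi', hb0, hcvpi⟩ := lam_inv h1 _ _ rfl
      obtain ⟨hcA, hcB⟩ := conv_pi_pi hcvpi
      obtain ⟨s₁, s₂, s₃, hA₀ty, hB'ty, _, _⟩ := pi_inv hpi' _ _ rfl
      have hc' : Typing P Γ c A₀ := Typing.conv h2 hA₀ty (Conv.symm hcA)
      have hwf := typing_wf h1
      have hsubst := substitution hb0 (SubC.zero hc') hwf
      rcases type_correct h1 with ⟨s0, he⟩ | ⟨s0, hT⟩
      · simp at he
      · obtain ⟨u₁, u₂, u₃, hAty, hBty2, _, _⟩ := pi_inv hT _ _ rfl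
        have hBsub := substitution hBty2 (SubC.zero h2) hwf
        exact Typing.conv hsubst hBsub (Conv.subst_left hcB)
  | conv h1 h2 hc ih1 _ =>
    intro x hs
    exact Typing.conv (ih1 _ hs) h2 hc
  | nil => trivial
  | cons _ _ => trivial

/-- Preservation for an arbitrary pure type system. -/
theorem preservation (P : PTSSpec) {Γ : Ctx} {a b A : Expr}
    (ht : Typing P Γ a A) (hs : Step a b) : Typing P Γ b A :=
  preservation' ht b hs
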